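/- The quantity ‖x‖ := sup_n |(Ax)_n| defines a norm on the set X∞ = {x : ℕ → ℝ | sup_n |(Ax)_n| < ∞}: in particular, if (Ax)_n = 0 for all n then x_n = 0 for all n. Moreover X∞ is complete for this norm: for every sequence (x^{(m)})_{m∈ℕ} of elements of X∞ that is Cauchy with respect to the distance d(x, x') = sup_n |(A(x − x'))_n|, there exists x ∈ X∞ with sup_n |(A(x^{(m)} − x))_n| → 0 as m → ∞. Furthermore, the subsets {x : (Ax)_n → 0 as n → ∞} and {x : lim_n (Ax)_n exists} are closed in X∞ for this distance, hence are themselves complete. -/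

import Mathlib

open Filter Topology

/-- `λ_{k−1}` with the convention `λ_{−1} := 0`. -/
noncomputable def lamPrev (lam : ℕ → ℝ) (k : ℕ) : ℝ := if k = 0 then 0 else lam (k - 1)

/-- Entries of the product matrix `A = Λ(B^{r,s}(Δ^{α̃}))`:
`A(n,k) = Σ_{i=k}^{n} ((λ_i − λ_{i−1})/λ_n)·(1/(s+r)^n)·C(n,i)·s^{n−i}·r^{i}·
(−1)^{i−k}·Γ(α̃+1)/((i−k)!·Γ(α̃−i+k+1))` for `k ≤ n` and `0` for `k > n`
(the `Finset.Icc k n` sum is empty when `k > n`). -/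
noncomputable def Amat (r s α : ℝ) (lam : ℕ → ℝ) (n k : ℕ) : ℝ :=
  ∑ i ∈ Finset.Icc k n,
    ((lam i - lamPrev lam i) / lam n) * (1 / (s + r) ^ n) * (n.choose i : ℝ) *
      s ^ (n - i) * r ^ i * (-1 : ℝ) ^ (i - k) *
      (Real.Gamma (α + 1) /
        ((Nat.factorial (i - k) : ℝ) * Real.Gamma (α - (i : ℝ) + (k : ℝ) + 1)))

/-- The `A`-transform of a real sequence `x`: `(Ax)_n = Σ_{k=0}^{n} A(n,k)·x_k`. -/
noncomputable def Atr (r s α : ℝ) (lam : ℕ → ℝ) (x : ℕ → ℝ) (n : ℕ) : ℝ :=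
  ∑ k ∈ Finset.range (n + 1), Amat r s α lam n k * x k

lemma Atr_sub (r s α : ℝ) (lam a b : ℕ → ℝ) (n : ℕ) :
    Atr r s α lam (fun j => a j - b j) n = Atr r s α lam a n - Atr r s α lam b n := by
  simp [Atr, mul_sub, Finset.sum_sub_distrib]

lemma Amat_diag_ne (r s α : ℝ) (lam : ℕ → ℝ) (hr : r ≠ 0) (hsr : s + r ≠ 0)
    (hα : 0 < α) (hlam0 : 0 < lam 0) (hmono : StrictMono lam) (n : ℕ) :
    Amat r s α lam n n ≠ 0 := by
  have hlampos : 0 < lam n := lt_of_lt_of_le hlam0 (hmono.monotone (Nat.zero_le n))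
  have hdiff : 0 < lam n - lamPrev lam n := by
    cases n with
    | zero => simpa [lamPrev] using hlam0
    | succ m => simpa [lamPrev] using hmono (Nat.lt_succ_self m)
  have hG : Real.Gamma (α + 1) ≠ 0 := (Real.Gamma_pos_of_pos (by linarith)).ne'
  have hcast : α - (n : ℝ) + (n : ℝ) + 1 = α + 1 := by ring
  rw [Amat, Finset.Icc_self, Finset.sum_singleton]
  simp only [Nat.sub_self, Nat.choose_self, pow_zero, Nat.factorial_zero, hcast]
  simp only [Nat.cast_one, one_mul, mul_one, div_self hG]
  exact mul_ne_zero (mul_ne_zero (div_ne_zero hdiff.ne' hlampos.ne')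
    (one_div_ne_zero (pow_ne_zero _ hsr))) (pow_ne_zero _ hr)

/-- Preimage of a sequence under the lower-triangular transform `Atr`. -/
noncomputable def preim (r s α : ℝ) (lam w : ℕ → ℝ) : ℕ → ℝ
  | n => (w n - ∑ k ∈ (Finset.range n).attach,
        Amat r s α lam n k.1 * preim r s α lam w k.1) / Amat r s α lam n n
  decreasing_by exact Finset.mem_range.mp k.2

lemma Atr_preim (r s α : ℝ) (lam : ℕ → ℝ) (hd : ∀ n, Amat r s α lam n n ≠ 0)
    (w : ℕ → ℝ) (n : ℕ) : Atr r s α lam (preim r s α lam w) n = w n := by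
  have hp : preim r s α lam w n = (w n - ∑ k ∈ Finset.range n,
      Amat r s α lam n k * preim r s α lam w k) / Amat r s α lam n n := by
    rw [preim, Finset.sum_attach (Finset.range n)
      (fun k => Amat r s α lam n k * preim r s α lam w k)]
  rw [Atr, Finset.sum_range_succ, hp, mul_comm, div_mul_cancel₀ _ (hd n)]
  ring

/-- `‖x‖ = sup_n |(Ax)_n|` is a norm on
`X∞ = {x | sup_n |(Ax)_n| < ∞}` (in particular `Ax = 0` implies `x = 0`),
`X∞` is complete for the induced distance, and the subsets
`{x : (Ax)_n → 0}` and `{x : lim_n (Ax)_n exists}` are closed in `X∞`,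
hence complete. -/
theorem binomial_space_BK (r s α : ℝ) (lam : ℕ → ℝ)
    (hr : r ≠ 0) (hsr : s + r ≠ 0) (hα : 0 < α) (hαint : ∀ m : ℤ, α ≠ (m : ℝ))
    (hlam0 : 0 < lam 0) (hmono : StrictMono lam) (hlam : Tendsto lam atTop atTop) :
    -- the norm separates points: `Ax = 0` implies `x = 0`
    (∀ x : ℕ → ℝ, (∀ n, Atr r s α lam x n = 0) → ∀ n, x n = 0) ∧
    -- completeness of `X∞` for the distance `d(x,x') = sup_n |(A(x−x'))_n|`
    (∀ x : ℕ → (ℕ → ℝ),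
      (∀ m, ∃ M : ℝ, ∀ n, |Atr r s α lam (x m) n| ≤ M) →
      (∀ ε > (0 : ℝ), ∃ N, ∀ p ≥ N, ∀ q ≥ N, ∀ n,
        |Atr r s α lam (fun j => x p j - x q j) n| < ε) →
      ∃ y : ℕ → ℝ, (∃ M : ℝ, ∀ n, |Atr r s α lam y n| ≤ M) ∧
        ∀ ε > (0 : ℝ), ∃ N, ∀ m ≥ N, ∀ n,
          |Atr r s α lam (fun j => x m j - y j) n| < ε) ∧
    -- `{x : (Ax)_n → 0}` is closed in `X∞`
    (∀ x : ℕ → (ℕ → ℝ), ∀ y : ℕ → ℝ,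
      (∀ m, Tendsto (Atr r s α lam (x m)) atTop (nhds 0)) →
      (∀ ε > (0 : ℝ), ∃ N, ∀ m ≥ N, ∀ n,
        |Atr r s α lam (fun j => x m j - y j) n| < ε) →
      Tendsto (Atr r s α lam y) atTop (nhds 0)) ∧
    -- `{x : lim_n (Ax)_n exists}` is closed in `X∞`
    (∀ x : ℕ → (ℕ → ℝ), ∀ y : ℕ → ℝ,
      (∀ m, ∃ l : ℝ, Tendsto (Atr r s α lam (x m)) atTop (nhds l)) →
      (∀ ε > (0 : ℝ), ∃ N, ∀ m ≥ N, ∀ n,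
        |Atr r s α lam (fun j => x m j - y j) n| < ε) →
      ∃ l : ℝ, Tendsto (Atr r s α lam y) atTop (nhds l)) := by
  have hd : ∀ n, Amat r s α lam n n ≠ 0 :=
    Amat_diag_ne r s α lam hr hsr hα hlam0 hmono
  refine ⟨?_, ?_, ?_, ?_⟩
  · -- injectivity
    intro x hx n
    induction n using Nat.strong_induction_on with
    | _ n ih =>
      have h := hx n
      rw [Atr, Finset.sum_range_succ] at h
      have hz : ∑ k ∈ Finset.range n, Amat r s α lam n k * x k = 0 :=
        Finset.sum_eq_zero fun k hk => by
          rw [ih k (Finset.mem_range.mp hk), mul_zero]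
      rw [hz, zero_add] at h
      exact (mul_eq_zero.mp h).resolve_left (hd n)
  · -- completeness
    intro x hb hc
    have hcz : ∀ n, CauchySeq (fun m => Atr r s α lam (x m) n) := by
      intro n
      rw [Metric.cauchySeq_iff]
      intro ε hε
      obtain ⟨N, hN⟩ := hc ε hε
      refine ⟨N, fun p hp q hq => ?_⟩
      have h := hN p hp q hq n
      rw [Atr_sub] at h
      simpa [Real.dist_eq] using h
    have hw : ∀ n, ∃ l, Tendsto (fun m => Atr r s α lam (x m) n) atTop (nhds l) :=
      fun n => cauchySeq_tendsto_of_complete (hcz n)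
    choose w hwt using hw
    have key : ∀ ε > (0:ℝ), ∃ N, ∀ m ≥ N, ∀ n,
        |Atr r s α lam (x m) n - w n| ≤ ε := by
      intro ε hε
      obtain ⟨N, hN⟩ := hc ε hε
      refine ⟨N, fun m hm n => ?_⟩
      have ht : Tendsto (fun q => |Atr r s α lam (x m) n - Atr r s α lam (x q) n|)
          atTop (nhds |Atr r s α lam (x m) n - w n|) :=
        (tendsto_const_nhds.sub (hwt n)).abs
      refine le_of_tendsto ht ?_
      filter_upwards [eventually_ge_atTop N] with q hq
      have h := hN m hm q hq n
      rw [Atr_sub] at h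
      exact h.le
    refine ⟨preim r s α lam w, ?_, ?_⟩
    · obtain ⟨N, hN⟩ := key 1 one_pos
      obtain ⟨M, hM⟩ := hb N
      refine ⟨M + 1, fun n => ?_⟩
      rw [Atr_preim r s α lam hd]
      have h1 := hN N le_rfl n
      have h2 := hM n
      have h3 : |w n| ≤ |Atr r s α lam (x N) n| + |w n - Atr r s α lam (x N) n| := by
        calc |w n| = |Atr r s α lam (x N) n + (w n - Atr r s α lam (x N) n)| := by
              congr 1; ring
          _ ≤ _ := abs_add_le _ _
      rw [abs_sub_comm] at h3
      linarith
    · intro ε hε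
      obtain ⟨N, hN⟩ := key (ε/2) (by linarith)
      refine ⟨N, fun m hm n => ?_⟩
      rw [Atr_sub, Atr_preim r s α lam hd]
      have := hN m hm n
      linarith
  · -- closedness of the null set
    intro x y h0 hu
    rw [Metric.tendsto_atTop]
    intro ε hε
    obtain ⟨m0, hm0⟩ := hu (ε/2) (by linarith)
    obtain ⟨N, hN⟩ := Metric.tendsto_atTop.mp (h0 m0) (ε/2) (by linarith)
    refine ⟨N, fun n hn => ?_⟩
    have ha := hm0 m0 le_rfl n
    rw [Atr_sub] at ha
    have hb := hN n hn
    rw [Real.dist_eq] at hb ⊢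
    rw [sub_zero] at hb ⊢
    have h3 : |Atr r s α lam y n| ≤
        |Atr r s α lam (x m0) n| + |Atr r s α lam (x m0) n - Atr r s α lam y n| := by
      calc |Atr r s α lam y n|
          = |Atr r s α lam (x m0) n - (Atr r s α lam (x m0) n - Atr r s α lam y n)| := by
            congr 1; ring
        _ ≤ _ := abs_sub _ _
    linarith
  · -- closedness of the convergence set
    intro x y hl hu
    apply cauchySeq_tendsto_of_complete
    rw [Metric.cauchySeq_iff]
    intro ε hε
    obtain ⟨m0, hm0⟩ := hu (ε/4) (by linarith)
    obtain ⟨l, hlm⟩ := hl m0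
    obtain ⟨N, hN⟩ := Metric.cauchySeq_iff.mp hlm.cauchySeq (ε/2) (by linarith)
    refine ⟨N, fun p hp q hq => ?_⟩
    have h1 := hm0 m0 le_rfl p
    have h2 := hm0 m0 le_rfl q
    rw [Atr_sub] at h1 h2
    have h3 := hN p hp q hq
    rw [Real.dist_eq] at h3 ⊢
    have h4 : |Atr r s α lam y p - Atr r s α lam y q| ≤
        |Atr r s α lam (x m0) p - Atr r s α lam y p| +
        |Atr r s α lam (x m0) p - Atr r s α lam (x m0) q| +
        |Atr r s α lam (x m0) q - Atr r s α lam y q| := by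
      calc |Atr r s α lam y p - Atr r s α lam y q|
          = |(-(Atr r s α lam (x m0) p - Atr r s α lam y p) +
              (Atr r s α lam (x m0) p - Atr r s α lam (x m0) q)) +
              (Atr r s α lam (x m0) q - Atr r s α lam y q)| := by congr 1; ring
        _ ≤ |(-(Atr r s α lam (x m0) p - Atr r s α lam y p) +
              (Atr r s α lam (x m0) p - Atr r s α lam (x m0) q))| +
              |Atr r s α lam (x m0) q - Atr r s α lam y q| := abs_add_le _ _
        _ ≤ _ := by
            have := abs_add_le (-(Atr r s α lam (x m0) p - Atr r s α lam y p))
              (Atr r s α lam (x m0) p - Atr r s α lam (x m0) q)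
            rw [abs_neg] at this
            linarith
    linarith
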